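/- Let d ≥ 1 be an integer, α ∈ (0,2), β ∈ (0,1). Let G be a measurable kernel satisfying the lower heat-kernel bound, and let V₀ : ℝ^d → [0,∞) be measurable and not almost everywhere zero. Then there exist T > 0 and C > 0 such that for all t ≥ T and all x ∈ ℝ^d with |x| ≤ t^{β/α}, ∫_{ℝ^d} G(t, x−y) V₀(y) dy ≥ C t^{-βd/α}. -/

import Mathlib

open MeasureTheory ENNReal

/-- Lemma 2.3. If `G` satisfies the lower heat-kernel bound and
`V₀ ≥ 0` is not a.e. zero, then there are `T > 0` and `C > 0` such that
`∫ G(t, x-y) V₀(y) dy ≥ C t^{-βd/α}` for all `t ≥ T` and `|x| ≤ t^{β/α}`. -/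
theorem heat_semigroup_lower_bound
    (d : ℕ) (hd : 1 ≤ d) (α β : ℝ)
    (hα : α ∈ Set.Ioo (0 : ℝ) 2) (hβ : β ∈ Set.Ioo (0 : ℝ) 1)
    (G : ℝ → EuclideanSpace ℝ (Fin d) → ℝ)
    (hGmeas : Measurable (Function.uncurry G))
    (hGnonneg : ∀ t x, 0 ≤ G t x)
    (c₁ : ℝ) (hc₁ : 0 < c₁)
    (hGlower : ∀ t : ℝ, 0 < t → ∀ x : EuclideanSpace ℝ (Fin d),
      c₁ * min (t ^ (-(β * d) / α)) (t ^ β / ‖x‖ ^ ((d : ℝ) + α)) ≤ G t x)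
    (V₀ : EuclideanSpace ℝ (Fin d) → ℝ)
    (hV₀meas : Measurable V₀) (hV₀nonneg : ∀ x, 0 ≤ V₀ x)
    (hV₀ne : ¬ (V₀ =ᵐ[volume] 0)) :
    ∃ T : ℝ, 0 < T ∧ ∃ C : ℝ, 0 < C ∧
      ∀ t : ℝ, T ≤ t → ∀ x : EuclideanSpace ℝ (Fin d), ‖x‖ ≤ t ^ (β / α) →
        ENNReal.ofReal (C * t ^ (-(β * d) / α))
          ≤ ∫⁻ y, ENNReal.ofReal (G t (x - y)) * ENNReal.ofReal (V₀ y) := by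
  haveI : Nonempty (Fin d) := ⟨⟨0, hd⟩⟩
  haveI : Nontrivial (EuclideanSpace ℝ (Fin d)) := inferInstance
  obtain ⟨hα0, hα2⟩ := hα
  obtain ⟨hβ0, hβ1⟩ := hβ
  -- find a set of positive measure where V₀ is bounded below
  set μ : Measure (EuclideanSpace ℝ (Fin d)) := volume with hμ
  have hSne : μ {y | V₀ y ≠ 0} ≠ 0 := by
    intro h
    exact hV₀ne (by simpa [Filter.EventuallyEq, ae_iff] using h)
  set A : ℕ → Set (EuclideanSpace ℝ (Fin d)) :=
    fun n => {y | 1 / (n + 1 : ℝ) ≤ V₀ y} ∩ Metric.ball 0 (n + 1) with hA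
  have hsub : {y | V₀ y ≠ 0} ⊆ ⋃ n, A n := by
    intro y hy
    have hy0 : 0 < V₀ y := lt_of_le_of_ne (hV₀nonneg y) (Ne.symm hy)
    obtain ⟨n, hn⟩ := exists_nat_gt (max (1 / V₀ y) ‖y‖)
    refine Set.mem_iUnion.2 ⟨n, ?_, ?_⟩
    · have h1 : 1 / V₀ y ≤ (n : ℝ) + 1 :=
        le_of_lt (lt_of_le_of_lt (le_max_left _ _) (lt_trans hn (lt_add_one _)))
      have hpos : (0 : ℝ) < (n : ℝ) + 1 := by positivity
      exact (one_div_le hy0 hpos).mp h1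
    · have : ‖y‖ < (n : ℝ) + 1 :=
        lt_of_le_of_lt (le_max_right _ _) (lt_trans hn (lt_add_one _))
      simpa [Metric.mem_ball, dist_eq_norm] using this
  have hAne : ∃ n, μ (A n) ≠ 0 := by
    by_contra h
    push_neg at h
    exact hSne (le_antisymm (le_trans (measure_mono hsub)
      (le_of_eq (measure_iUnion_null h))) zero_le)
  obtain ⟨n, hAn⟩ := hAne
  have hAmeas : MeasurableSet (A n) :=
    ((measurableSet_le measurable_const hV₀meas)).inter measurableSet_ball
  have hAfin : μ (A n) < ⊤ :=
    lt_of_le_of_lt (measure_mono Set.inter_subset_right) measure_ball_lt_top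
  have hApos : 0 < μ (A n) := pos_iff_ne_zero.mpr hAn
  set R : ℝ := (n : ℝ) + 1 with hR
  have hRpos : (0 : ℝ) < R := by positivity
  set ε : ℝ := 1 / R with hε
  have hεpos : 0 < ε := by positivity
  set κ : ℝ := (2 : ℝ) ^ (-((d : ℝ) + α)) with hκ
  have hκpos : 0 < κ := Real.rpow_pos_of_pos two_pos _
  have hκle1 : κ ≤ 1 :=
    Real.rpow_le_one_of_one_le_of_nonpos one_le_two (neg_nonpos.mpr (by positivity))
  have hAtoReal : 0 < (μ (A n)).toReal := ENNReal.toReal_pos hAn hAfin.ne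
  refine ⟨max 1 (R ^ (α / β)), lt_of_lt_of_le one_pos (le_max_left _ _),
    c₁ * κ * ε * (μ (A n)).toReal, by positivity, ?_⟩
  intro t ht x hx
  have ht1 : (1 : ℝ) ≤ t := le_trans (le_max_left _ _) ht
  have ht0 : (0 : ℝ) < t := lt_of_lt_of_le one_pos ht1
  set p : ℝ := -(β * (d : ℝ)) / α with hp
  have htp : 0 < t ^ p := Real.rpow_pos_of_pos ht0 _
  -- R ≤ t ^ (β/α)
  have hRle : R ≤ t ^ (β / α) := by
    have h1 : R ^ (α / β) ≤ t := le_trans (le_max_right _ _) ht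
    have h2 : (R ^ (α / β)) ^ (β / α) ≤ t ^ (β / α) :=
      Real.rpow_le_rpow (by positivity) h1 (by positivity)
    calc R = R ^ ((α / β) * (β / α)) := by
            rw [show (α / β) * (β / α) = 1 by field_simp, Real.rpow_one]
      _ = (R ^ (α / β)) ^ (β / α) := Real.rpow_mul hRpos.le _ _
      _ ≤ t ^ (β / α) := h2
  -- pointwise lower bound on G on (A n) \ {x}
  have hGbound : ∀ y ∈ A n, y ≠ x → c₁ * (κ * t ^ p) ≤ G t (x - y) := by
    intro y hy hyx
    have hxy0 : 0 < ‖x - y‖ := by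
      rw [norm_pos_iff]
      exact sub_ne_zero.mpr (Ne.symm hyx)
    have hynorm : ‖y‖ ≤ R := by
      have := hy.2
      rw [Metric.mem_ball, dist_eq_norm, sub_zero] at this
      exact this.le
    have hxy : ‖x - y‖ ≤ 2 * t ^ (β / α) := by
      calc ‖x - y‖ ≤ ‖x‖ + ‖y‖ := norm_sub_le _ _
        _ ≤ t ^ (β / α) + t ^ (β / α) := add_le_add hx (hynorm.trans hRle)
        _ = 2 * t ^ (β / α) := by ring
    have hmin : κ * t ^ p ≤ min (t ^ p) (t ^ β / ‖x - y‖ ^ ((d : ℝ) + α)) := by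
      refine le_min (mul_le_of_le_one_left htp.le hκle1) ?_
      have hpow : ‖x - y‖ ^ ((d : ℝ) + α)
          ≤ (2 : ℝ) ^ ((d : ℝ) + α) * t ^ ((β / α) * ((d : ℝ) + α)) := by
        have h1 : ‖x - y‖ ^ ((d : ℝ) + α) ≤ (2 * t ^ (β / α)) ^ ((d : ℝ) + α) :=
          Real.rpow_le_rpow (norm_nonneg _) hxy (by positivity)
        calc ‖x - y‖ ^ ((d : ℝ) + α) ≤ (2 * t ^ (β / α)) ^ ((d : ℝ) + α) := h1
          _ = (2 : ℝ) ^ ((d : ℝ) + α) * (t ^ (β / α)) ^ ((d : ℝ) + α) :=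
            Real.mul_rpow (by norm_num) (by positivity)
          _ = (2 : ℝ) ^ ((d : ℝ) + α) * t ^ ((β / α) * ((d : ℝ) + α)) := by
            rw [← Real.rpow_mul ht0.le]
      have h2 : t ^ β / ((2 : ℝ) ^ ((d : ℝ) + α) * t ^ ((β / α) * ((d : ℝ) + α)))
          ≤ t ^ β / ‖x - y‖ ^ ((d : ℝ) + α) := by
        apply div_le_div_of_nonneg_left (by positivity) (by positivity) hpow
      refine le_trans (le_of_eq ?_) h2
      have hq : β - (β / α) * ((d : ℝ) + α) = p := by
        rw [hp]; field_simp; ring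
      rw [hκ, Real.rpow_neg (by norm_num : (0:ℝ) ≤ 2), ← hq,
        Real.rpow_sub ht0]
      have h2s : (0 : ℝ) < (2 : ℝ) ^ ((d : ℝ) + α) := Real.rpow_pos_of_pos two_pos _
      have hts : (0 : ℝ) < t ^ ((β / α) * ((d : ℝ) + α)) := Real.rpow_pos_of_pos ht0 _
      field_simp
    calc c₁ * (κ * t ^ p) ≤ c₁ * min (t ^ p) (t ^ β / ‖x - y‖ ^ ((d : ℝ) + α)) :=
          mul_le_mul_of_nonneg_left hmin hc₁.le
      _ ≤ G t (x - y) := by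
          have := hGlower t ht0 (x - y)
          rwa [hp]
  -- integrate the pointwise bound
  have hae : ∀ᵐ y ∂(μ.restrict (A n)),
      ENNReal.ofReal (c₁ * (κ * t ^ p) * ε)
        ≤ ENNReal.ofReal (G t (x - y)) * ENNReal.ofReal (V₀ y) := by
    have hne : ∀ᵐ y ∂μ, y ≠ x := by
      refine (ae_iff).mpr ?_
      rw [hμ]
      convert measure_singleton (μ := (volume : Measure (EuclideanSpace ℝ (Fin d)))) x using 2
      ext y; simp
    filter_upwards [ae_restrict_of_ae hne, ae_restrict_mem hAmeas] with y hyx hyA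
    have h1 : c₁ * (κ * t ^ p) ≤ G t (x - y) := hGbound y hyA hyx
    have h2 : ε ≤ V₀ y := hyA.1
    rw [ENNReal.ofReal_mul (by positivity)]
    exact mul_le_mul' (ENNReal.ofReal_le_ofReal h1) (ENNReal.ofReal_le_ofReal h2)
  have hint : ENNReal.ofReal (c₁ * (κ * t ^ p) * ε) * μ (A n)
      ≤ ∫⁻ y, ENNReal.ofReal (G t (x - y)) * ENNReal.ofReal (V₀ y) := by
    calc ENNReal.ofReal (c₁ * (κ * t ^ p) * ε) * μ (A n)
        = ∫⁻ _ in A n, ENNReal.ofReal (c₁ * (κ * t ^ p) * ε) ∂μ := by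
          rw [setLIntegral_const]
      _ ≤ ∫⁻ y in A n, ENNReal.ofReal (G t (x - y)) * ENNReal.ofReal (V₀ y) ∂μ :=
          lintegral_mono_ae hae
      _ ≤ ∫⁻ y, ENNReal.ofReal (G t (x - y)) * ENNReal.ofReal (V₀ y) ∂μ :=
          setLIntegral_le_lintegral _ _
  refine le_trans (le_of_eq ?_) hint
  rw [show c₁ * κ * ε * (μ (A n)).toReal * t ^ (-(β * ↑d) / α)
      = c₁ * (κ * t ^ p) * ε * (μ (A n)).toReal by rw [hp]; ring,
    ENNReal.ofReal_mul (by positivity), ENNReal.ofReal_toReal hAfin.ne]
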